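/- Let K be a number field of degree 6. If there exist at least three distinct prime ideals of the ring of integers of K lying above 2 with residue degree 2, then 2 divides i(K), the gcd of the indices (Z_K : ℤ[α]) over all integral primitive elements α of K; in particular K is not monogenic. -/

import Mathlib

open NumberField Polynomial

/-- In a field where `2 = 0`, every integer casts to `0` (if even) or `1` (if odd). -/
lemma cast_zero_or_one_aux {F : Type*} [Field F] (h2 : (2 : F) = 0) (c : ℤ) :
    ((c : F) = 0 ∧ 2 ∣ c) ∨ ((c : F) = 1 ∧ ¬ 2 ∣ c) := by
  have hdec : c = 2 * (c / 2) + c % 2 := (Int.mul_ediv_add_emod c 2).symm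
  have hcast : (c : F) = ((c % 2 : ℤ) : F) := by
    conv_lhs => rw [hdec]
    push_cast [h2]
    ring
  rcases Int.emod_two_eq c with h | h
  · left
    exact ⟨by rw [hcast, h, Int.cast_zero], Int.dvd_of_emod_eq_zero h⟩
  · right
    exact ⟨by rw [hcast, h, Int.cast_one], by omega⟩

/-- In a field `F` of cardinality `4` and characteristic `2`, with `β` a ring generator
over `ℤ`, the kernel of evaluation at `β` is exactly `(2, X² + X + 1)`. -/
lemma fq_ker_aux {F : Type*} [Field F] (β : F) (h2 : (2 : F) = 0) (hcard : Nat.card F = 4)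
    (hsurj : ∀ z : F, ∃ p : ℤ[X], aeval β p = z) (p : ℤ[X]) :
    aeval β p = 0 ↔ p ∈ Ideal.span ({C 2, X ^ 2 + X + 1} : Set ℤ[X]) := by
  classical
  have hfin : Finite F := Nat.finite_of_card_ne_zero (by omega)
  have : Fintype F := Fintype.ofFinite F
  have hcard' : Fintype.card F = 4 := by rw [← Nat.card_eq_fintype_card, hcard]
  have hβ : ∀ c : ℤ, β ≠ (c : F) := by
    intro c hc
    have hall : ∀ z : F, z = 0 ∨ z = 1 := by
      intro z
      obtain ⟨q, hq⟩ := hsurj z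
      have hqc : aeval β q = ((q.eval c : ℤ) : F) := by
        rw [hc]
        have := eval₂_hom (Int.castRingHom F) c (p := q)
        simpa [aeval_def] using this
      rcases cast_zero_or_one_aux h2 (q.eval c) with ⟨h, -⟩ | ⟨h, -⟩
      · left; rw [← hq, hqc, h]
      · right; rw [← hq, hqc, h]
    have huniv : (Finset.univ : Finset F) ⊆ {0, 1} := by
      intro z _
      rcases hall z with h | h <;> simp [h]
    have hle := Finset.card_le_card huniv
    have h01 : ({0, 1} : Finset F).card ≤ 2 := (Finset.card_insert_le _ _).trans (by simp)
    rw [Finset.card_univ, hcard'] at hle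
    omega
  have hβ0 : β ≠ 0 := by simpa using hβ 0
  have hβ1 : β ≠ 1 := by simpa using hβ 1
  have hpow : β ^ 4 = β := by
    have := FiniteField.pow_card β
    rwa [hcard'] at this
  have hroot : β ^ 2 + β + 1 = 0 := by
    have h4 : β * ((β - 1) * (β ^ 2 + β + 1)) = 0 := by linear_combination hpow
    rcases mul_eq_zero.mp h4 with h | h
    · exact absurd h hβ0
    rcases mul_eq_zero.mp h with h | h
    · exact absurd (sub_eq_zero.mp h) hβ1
    · exact h
  have hg : (X ^ 2 + X + 1 : ℤ[X]).Monic := by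
    have h : (X ^ 2 + X + 1 : ℤ[X]) = X ^ 2 + (X + 1) := by ring
    rw [h]
    apply monic_X_pow_add
    have h1 : (X + 1 : ℤ[X]).degree ≤ 1 := by compute_degree
    exact h1.trans_lt (by norm_num)
  have hevalg : aeval β (X ^ 2 + X + 1 : ℤ[X]) = 0 := by
    simpa using hroot
  constructor
  · intro hp0
    have hdiv := modByMonic_add_div p (X ^ 2 + X + 1)
    set r := p %ₘ (X ^ 2 + X + 1) with hr
    have hdegr : r.degree ≤ 1 := by
      have hlt := degree_modByMonic_lt p hg
      have hdg : (X ^ 2 + X + 1 : ℤ[X]).degree = 2 := by compute_degree!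
      rw [hdg] at hlt
      exact Order.le_of_lt_succ hlt
    have hrx := eq_X_add_C_of_degree_le_one hdegr
    have hevalr : aeval β r = 0 := by
      have h5 : aeval β r + aeval β ((X ^ 2 + X + 1 : ℤ[X]) * (p /ₘ (X ^ 2 + X + 1))) = 0 := by
        rw [← map_add, hdiv, hp0]
      rwa [map_mul, hevalg, zero_mul, add_zero] at h5
    have hevalr' : ((r.coeff 1 : ℤ) : F) * β + ((r.coeff 0 : ℤ) : F) = 0 := by
      rw [hrx] at hevalr
      simpa using hevalr
    rcases cast_zero_or_one_aux h2 (r.coeff 1) with ⟨ha, ha2⟩ | ⟨ha, -⟩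
    · have hb : ((r.coeff 0 : ℤ) : F) = 0 := by
        rw [ha, zero_mul, zero_add] at hevalr'; exact hevalr'
      have hb2 : 2 ∣ r.coeff 0 := by
        rcases cast_zero_or_one_aux h2 (r.coeff 0) with ⟨-, h⟩ | ⟨h, -⟩
        · exact h
        · rw [h] at hb; exact absurd hb one_ne_zero
      obtain ⟨a', ha'⟩ := ha2
      obtain ⟨b', hb'⟩ := hb2
      rw [Ideal.mem_span_pair]
      refine ⟨C a' * X + C b', p /ₘ (X ^ 2 + X + 1), ?_⟩
      calc (C a' * X + C b') * C 2 + p /ₘ (X ^ 2 + X + 1) * (X ^ 2 + X + 1)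
          = (C (2 * a') * X + C (2 * b')) + (X ^ 2 + X + 1) * (p /ₘ (X ^ 2 + X + 1)) := by
            rw [C_mul, C_mul]; ring
        _ = r + (X ^ 2 + X + 1) * (p /ₘ (X ^ 2 + X + 1)) := by rw [hrx, ha', hb']
        _ = p := hdiv
    · exfalso
      have hfinal : β = ((-(r.coeff 0) : ℤ) : F) := by
        rw [ha, one_mul] at hevalr'
        push_cast
        linear_combination hevalr'
      exact hβ (-(r.coeff 0)) hfinal
  · intro hp
    rw [Ideal.mem_span_pair] at hp
    obtain ⟨u, v, huv⟩ := hp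
    rw [← huv]
    have hC2 : aeval β (C 2 : ℤ[X]) = 0 := by
      rw [aeval_C]
      simpa using h2
    rw [map_add, map_mul, map_mul, hC2, hevalg, mul_zero, mul_zero, add_zero]

set_option synthInstance.maxHeartbeats 1000000 in
set_option maxHeartbeats 1000000 in
/-- For a prime `P` above `2` with residue degree `2`, if `ℤ[α]` has odd additive index
(expressed via the decomposition hypothesis `hA`), then membership of `aeval α p` in `P` is
governed by the ideal `(2, X² + X + 1)` of `ℤ[X]`. -/
lemma aeval_mem_iff_aux {K : Type*} [Field K] [NumberField K] (α : 𝓞 K)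
    (hA : ∀ x : 𝓞 K, ∃ p : ℤ[X], ∃ y : 𝓞 K, x = aeval α p + 2 * y)
    (P : Ideal (𝓞 K)) (hP : P.IsPrime)
    (hc : P.comap (algebraMap ℤ (𝓞 K)) = Ideal.span {(2 : ℤ)})
    (hf : Ideal.inertiaDeg' (Ideal.span {(2 : ℤ)}) P = 2)
    (p : ℤ[X]) :
    aeval α p ∈ P ↔ p ∈ Ideal.span ({C 2, X ^ 2 + X + 1} : Set ℤ[X]) := by
  have h2P : (2 : 𝓞 K) ∈ P := by
    have h := Ideal.mem_comap.mp (hc ▸ Ideal.mem_span_singleton_self (2 : ℤ))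
    simpa using h
  have hbot : P ≠ ⊥ := by
    intro h
    rw [h, Ideal.mem_bot] at h2P
    norm_num at h2P
  haveI hmax : P.IsMaximal := hP.isMaximal hbot
  letI : Field (𝓞 K ⧸ P) := Ideal.Quotient.field P
  set β := Ideal.Quotient.mk P α with hβ
  have h2 : (2 : 𝓞 K ⧸ P) = 0 := by
    have := Ideal.Quotient.eq_zero_iff_mem.mpr h2P
    rw [map_ofNat] at this
    exact this
  have hmkaeval : ∀ q : ℤ[X], Ideal.Quotient.mk P (aeval α q) = aeval β q := by
    intro q
    rw [hβ, ← Ideal.Quotient.mkₐ_eq_mk ℤ P]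
    exact (aeval_algHom_apply (Ideal.Quotient.mkₐ ℤ P) α q).symm
  have hsurj : ∀ z : 𝓞 K ⧸ P, ∃ q : ℤ[X], aeval β q = z := by
    intro z
    obtain ⟨x, rfl⟩ := Ideal.Quotient.mk_surjective z
    obtain ⟨q, y, hxy⟩ := hA x
    refine ⟨q, ?_⟩
    rw [hxy, map_add, map_mul, hmkaeval q]
    have : Ideal.Quotient.mk P (2 : 𝓞 K) = 0 := by rw [map_ofNat]; exact h2
    rw [this, zero_mul, add_zero]
  rw [Ideal.inertiaDeg', dif_pos hc] at hf
  letI : Algebra (ℤ ⧸ Ideal.span {(2 : ℤ)}) (𝓞 K ⧸ P) :=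
    Ideal.Quotient.algebraQuotientOfLEComap (le_of_eq hc.symm)
  haveI hspanmax : (Ideal.span {(2 : ℤ)}).IsMaximal :=
    PrincipalIdealRing.isMaximal_of_irreducible Int.prime_two.irreducible
  letI : Field (ℤ ⧸ Ideal.span {(2 : ℤ)}) := Ideal.Quotient.field _
  have hk2 : Nat.card (ℤ ⧸ Ideal.span {(2 : ℤ)}) = 2 := by
    rw [Nat.card_congr (Int.quotientSpanEquivZMod 2).toEquiv, Nat.card_zmod]; norm_num
  have hfink : Finite (ℤ ⧸ Ideal.span {(2 : ℤ)}) :=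
    Nat.finite_of_card_ne_zero (by omega)
  haveI hFD : FiniteDimensional (ℤ ⧸ Ideal.span {(2 : ℤ)}) (𝓞 K ⧸ P) :=
    FiniteDimensional.of_finrank_pos (by rw [hf]; norm_num)
  have hfinF : Finite (𝓞 K ⧸ P) := Module.finite_of_finite (ℤ ⧸ Ideal.span {(2 : ℤ)})
  have hcard : Nat.card (𝓞 K ⧸ P) = 4 := by
    letI : Fintype (ℤ ⧸ Ideal.span {(2 : ℤ)}) := Fintype.ofFinite _
    letI : Fintype (𝓞 K ⧸ P) := Fintype.ofFinite _
    rw [Nat.card_eq_fintype_card, Module.card_eq_pow_finrank (K := ℤ ⧸ Ideal.span {(2 : ℤ)}), hf,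
      ← Nat.card_eq_fintype_card, hk2]
    norm_num
  rw [← fq_ker_aux β h2 hcard hsurj p]
  have := Ideal.Quotient.eq_zero_iff_mem (a := aeval α p) (I := P)
  rw [hmkaeval p] at this
  exact this.symm

/-- The index `(Z_K : ℤ[α])` of the subring generated by `α` in the ring of integers. -/
noncomputable def subindex {K : Type*} [Field K] [NumberField K] (α : 𝓞 K) : ℕ :=
  ((Algebra.adjoin ℤ ({α} : Set (𝓞 K))).toSubmodule.toAddSubgroup).index

/-- The set of indices of integral primitive elements of `K`. -/
def indexSet (K : Type*) [Field K] [NumberField K] : Set ℤ :=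
  {n : ℤ | ∃ α : 𝓞 K, Algebra.adjoin ℚ ({(α : K)} : Set K) = ⊤ ∧
    n = (subindex α : ℤ)}

/-- The index `i(K)` of the number field `K`: the gcd of the indices of all
integral primitive elements, realized as the nonnegative generator of the ideal
of `ℤ` generated by these indices. -/
noncomputable def fieldIndex (K : Type*) [Field K] [NumberField K] : ℕ :=
  (@Submodule.IsPrincipal.generator ℤ ℤ _ _ _ (Ideal.span (indexSet K))
    (IsPrincipalIdealRing.principal _)).natAbs

/-- A number field is monogenic if its ring of integers is generated by one element. -/
def IsMonogenic (K : Type*) [Field K] [NumberField K] : Prop :=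
  ∃ α : 𝓞 K, Algebra.adjoin ℤ ({α} : Set (𝓞 K)) = ⊤

/-- If a sextic number field has at least three distinct prime ideals above `2` with
residue degree `2`, then `2` divides the field index `i(K)`; in particular `K` is not
monogenic. -/
theorem two_dvd_fieldIndex_of_three_primes (K : Type*) [Field K] [NumberField K]
    (hdeg : Module.finrank ℚ K = 6)
    (P₁ P₂ P₃ : Ideal (𝓞 K))
    (h₁ : P₁.IsPrime) (h₂ : P₂.IsPrime) (h₃ : P₃.IsPrime)
    (hne₁ : P₁ ≠ P₂) (hne₂ : P₁ ≠ P₃) (hne₃ : P₂ ≠ P₃)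
    (hc₁ : P₁.comap (algebraMap ℤ (𝓞 K)) = Ideal.span {(2 : ℤ)})
    (hc₂ : P₂.comap (algebraMap ℤ (𝓞 K)) = Ideal.span {(2 : ℤ)})
    (hc₃ : P₃.comap (algebraMap ℤ (𝓞 K)) = Ideal.span {(2 : ℤ)})
    (hf₁ : Ideal.inertiaDeg' (Ideal.span {(2 : ℤ)}) P₁ = 2)
    (hf₂ : Ideal.inertiaDeg' (Ideal.span {(2 : ℤ)}) P₂ = 2)
    (hf₃ : Ideal.inertiaDeg' (Ideal.span {(2 : ℤ)}) P₃ = 2) :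
    2 ∣ fieldIndex K ∧ ¬ IsMonogenic K := by
  -- The key step: `2` divides the index of `ℤ[α]` for *every* `α ∈ 𝓞 K`.
  have key : ∀ α : 𝓞 K, 2 ∣ subindex α := by
    intro α
    by_contra hdvd
    -- Since the index is odd, every element of `𝓞 K` is congruent to an element
    -- of `ℤ[α]` modulo `2`.
    have hA : ∀ x : 𝓞 K, ∃ p : ℤ[X], ∃ y : 𝓞 K, x = aeval α p + 2 * y := by
      intro x
      have hnx : (subindex α : 𝓞 K) * x ∈ Algebra.adjoin ℤ ({α} : Set (𝓞 K)) := by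
        have h := AddSubgroup.nsmul_index_mem
          ((Algebra.adjoin ℤ ({α} : Set (𝓞 K))).toSubmodule.toAddSubgroup) x
        rw [Submodule.mem_toAddSubgroup, Subalgebra.mem_toSubmodule] at h
        rw [← nsmul_eq_mul]
        exact h
      have hcop : Nat.Coprime 2 (subindex α) := (Nat.prime_two.coprime_iff_not_dvd).mpr hdvd
      have hcopz : IsCoprime (2 : ℤ) ((subindex α : ℕ) : ℤ) := Nat.isCoprime_iff_coprime.mpr hcop
      obtain ⟨u, v, huv⟩ := hcopz
      have hsS : (v : 𝓞 K) * ((subindex α : 𝓞 K) * x) ∈ Algebra.adjoin ℤ ({α} : Set (𝓞 K)) :=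
        (Algebra.adjoin ℤ ({α} : Set (𝓞 K))).mul_mem (intCast_mem _ v) hnx
      rw [Algebra.adjoin_singleton_eq_range_aeval] at hsS
      obtain ⟨p, hp⟩ := hsS
      have hp2 : aeval α p = (v : 𝓞 K) * ((subindex α : 𝓞 K) * x) := hp
      refine ⟨p, (u : 𝓞 K) * x, ?_⟩
      have hcast : (u : 𝓞 K) * 2 + (v : 𝓞 K) * ((subindex α : ℕ) : 𝓞 K) = 1 := by
        exact_mod_cast congrArg (fun z : ℤ => (z : 𝓞 K)) huv
      rw [hp2]
      linear_combination (-x) * hcast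
    -- But then `P₁` and `P₂` are both determined by the ideal `(2, X² + X + 1)` of `ℤ[X]`,
    -- hence equal: contradiction.
    have h2P₁ : (2 : 𝓞 K) ∈ P₁ := by
      have h := Ideal.mem_comap.mp (hc₁ ▸ Ideal.mem_span_singleton_self (2 : ℤ))
      simpa using h
    have h2P₂ : (2 : 𝓞 K) ∈ P₂ := by
      have h := Ideal.mem_comap.mp (hc₂ ▸ Ideal.mem_span_singleton_self (2 : ℤ))
      simpa using h
    have hchar₁ := aeval_mem_iff_aux α hA P₁ h₁ hc₁ hf₁
    have hchar₂ := aeval_mem_iff_aux α hA P₂ h₂ hc₂ hf₂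
    apply hne₁
    ext x
    constructor
    · intro hx
      obtain ⟨p, y, rfl⟩ := hA x
      have hae : aeval α p ∈ P₁ := by
        have h2y : (2 : 𝓞 K) * y ∈ P₁ := Ideal.mul_mem_right y P₁ h2P₁
        have := Ideal.sub_mem P₁ hx h2y
        simpa using this
      exact Ideal.add_mem P₂ ((hchar₂ p).mpr ((hchar₁ p).mp hae))
        (Ideal.mul_mem_right y P₂ h2P₂)
    · intro hx
      obtain ⟨p, y, rfl⟩ := hA x
      have hae : aeval α p ∈ P₂ := by
        have h2y : (2 : 𝓞 K) * y ∈ P₂ := Ideal.mul_mem_right y P₂ h2P₂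
        have := Ideal.sub_mem P₂ hx h2y
        simpa using this
      exact Ideal.add_mem P₁ ((hchar₁ p).mpr ((hchar₂ p).mp hae))
        (Ideal.mul_mem_right y P₁ h2P₁)
  -- Hence `2` divides the generator of the ideal of indices.
  have hdvd2 : (2 : ℤ) ∣ Submodule.IsPrincipal.generator (Ideal.span (indexSet K)) := by
    rw [← Ideal.mem_span_singleton]
    apply Ideal.span_le.mpr ?_ (Submodule.IsPrincipal.generator_mem _)
    rintro n ⟨α, -, rfl⟩
    rw [SetLike.mem_coe, Ideal.mem_span_singleton]
    exact_mod_cast key α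
  constructor
  · exact Int.natAbs_dvd_natAbs.mpr hdvd2
  · rintro ⟨α, hα⟩
    have h1 : subindex α = 1 := by
      unfold subindex
      rw [hα, Algebra.top_toSubmodule, Submodule.top_toAddSubgroup, AddSubgroup.index_top]
    have h := key α
    rw [h1] at h
    norm_num at h
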